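/- Let A be the C*-algebra of bounded sequences (a_i) with a_i in the compact operators K on l^2(ℕ). Then two projections P, Q in a matrix algebra Mat_r(A) are Murray–von Neumann equivalent if and only if for every i the components P_i, Q_i ∈ Mat_r(K) are Murray–von Neumann equivalent. -/

import Mathlib

/-!
STATEMENT 3: Let A be the C*-algebra of bounded sequences (a_i) with a_i in the compact
operators K = K(l²(ℕ)).  Two projections P, Q ∈ Mat_r(A) are Murray–von Neumann equivalent
iff for every i the components P_i, Q_i ∈ Mat_r(K) are Murray–von Neumann equivalent.

We realize elements of A as sequences of compact operators on ℓ²(ℕ) which are uniformly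
bounded in norm; matrices over A are matrices of such sequences, and Murray–von Neumann
equivalence in Mat_r(A) is witnessed by a matrix V over A with V·V* = P, V*·V = Q.
-/

open scoped Matrix ComplexOrder
noncomputable section

/-- The Hilbert space ℓ²(ℕ). -/
abbrev l2 : Type := lp (fun _ : ℕ => ℂ) 2

/-- The bounded operators on ℓ²(ℕ). -/
abbrev Bop : Type := l2 →L[ℂ] l2

/-- Murray–von Neumann equivalence of two matrices over the compact operators
K ⊂ B(ℓ²(ℕ)), witnessed by a partial isometry with compact entries. -/
def MvNCompact {r : ℕ} (P Q : Matrix (Fin r) (Fin r) Bop) : Prop :=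
  ∃ V : Matrix (Fin r) (Fin r) Bop,
    (∀ k l, IsCompactOperator (V k l)) ∧ V * Vᴴ = P ∧ Vᴴ * V = Q

/-- The `i`-th component of a matrix of sequences of operators. -/
def component {r : ℕ} (P : Matrix (Fin r) (Fin r) (ℕ → Bop)) (i : ℕ) :
    Matrix (Fin r) (Fin r) Bop :=
  fun k l => P k l i

/-- Membership in A = ∏_{i∈ℕ} K (bounded sequences of compact operators), entrywise for a
matrix. -/
def MatOverA {r : ℕ} (P : Matrix (Fin r) (Fin r) (ℕ → Bop)) : Prop :=
  (∀ k l i, IsCompactOperator (P k l i)) ∧ ∃ C : ℝ, ∀ k l i, ‖P k l i‖ ≤ C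


open scoped InnerProductSpace

lemma component_mul {r : ℕ} (P Q : Matrix (Fin r) (Fin r) (ℕ → Bop)) (i : ℕ) :
    component (P * Q) i = component P i * component Q i := by
  ext k l
  simp [component, Matrix.mul_apply, Finset.sum_apply]

lemma component_conjTranspose {r : ℕ} (P : Matrix (Fin r) (Fin r) (ℕ → Bop)) (i : ℕ) :
    component Pᴴ i = (component P i)ᴴ := by
  ext k l
  simp [component, Matrix.conjTranspose_apply]

lemma entry_norm_le {r : ℕ} (W : Matrix (Fin r) (Fin r) Bop) (k l : Fin r) :
    ‖W k l‖ ≤ Real.sqrt ‖(W * Wᴴ) k k‖ := by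
  set R : Bop := (W * Wᴴ) k k with hR
  have hsum : ∀ x : l2, RCLike.re (⟪R x, x⟫_ℂ) = ∑ j, ‖(star (W k j)) x‖ ^ 2 := by
    intro x
    rw [hR, Matrix.mul_apply]
    rw [ContinuousLinearMap.sum_apply, sum_inner, map_sum]
    refine Finset.sum_congr rfl fun j _ => ?_
    rw [Matrix.conjTranspose_apply, ContinuousLinearMap.mul_apply,
      ContinuousLinearMap.star_eq_adjoint,
      ← ContinuousLinearMap.adjoint_inner_right,
      ← ContinuousLinearMap.star_eq_adjoint, inner_self_eq_norm_sq]
  have hterm : ∀ x : l2, ‖(star (W k l)) x‖ ^ 2 ≤ ‖R‖ * ‖x‖ ^ 2 := by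
    intro x
    have h1 : ‖(star (W k l)) x‖ ^ 2 ≤ ∑ j, ‖(star (W k j)) x‖ ^ 2 :=
      Finset.single_le_sum (f := fun j => ‖(star (W k j)) x‖ ^ 2)
        (fun j _ => by positivity) (Finset.mem_univ l)
    have h2 : RCLike.re (⟪R x, x⟫_ℂ) ≤ ‖R‖ * ‖x‖ ^ 2 := by
      calc RCLike.re (⟪R x, x⟫_ℂ) ≤ ‖(⟪R x, x⟫_ℂ)‖ := RCLike.re_le_norm _
        _ ≤ ‖R x‖ * ‖x‖ := norm_inner_le_norm _ _
        _ ≤ (‖R‖ * ‖x‖) * ‖x‖ := by gcongr; exact R.le_opNorm x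
        _ = ‖R‖ * ‖x‖ ^ 2 := by ring
    rw [← hsum x] at h1
    exact h1.trans h2
  have hb : ∀ x : l2, ‖(star (W k l)) x‖ ≤ Real.sqrt ‖R‖ * ‖x‖ := by
    intro x
    have h0 : ‖(star (W k l)) x‖ = Real.sqrt (‖(star (W k l)) x‖ ^ 2) := by
      rw [Real.sqrt_sq (norm_nonneg _)]
    rw [h0]
    calc Real.sqrt (‖(star (W k l)) x‖ ^ 2) ≤ Real.sqrt (‖R‖ * ‖x‖ ^ 2) :=
          Real.sqrt_le_sqrt (hterm x)
      _ = Real.sqrt ‖R‖ * ‖x‖ := by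
          rw [Real.sqrt_mul (norm_nonneg _), Real.sqrt_sq (norm_nonneg _)]
  have hfin : ‖star (W k l)‖ ≤ Real.sqrt ‖R‖ :=
    ContinuousLinearMap.opNorm_le_bound _ (Real.sqrt_nonneg _) hb
  calc ‖W k l‖ = ‖star (W k l)‖ := (norm_star _).symm
    _ ≤ Real.sqrt ‖R‖ := hfin

theorem mvn_iff_componentwise (r : ℕ)
    (P Q : Matrix (Fin r) (Fin r) (ℕ → Bop))
    (hPA : MatOverA P) (hQA : MatOverA Q)
    (hPsa : Pᴴ = P) (hPidem : P * P = P)    -- P is a projection in Mat_r(A)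
    (hQsa : Qᴴ = Q) (hQidem : Q * Q = Q) :  -- Q is a projection in Mat_r(A)
    -- P ~ Q in Mat_r(A) iff P_i ~ Q_i in Mat_r(K) for all i :
    (∃ V : Matrix (Fin r) (Fin r) (ℕ → Bop),
        MatOverA V ∧ V * Vᴴ = P ∧ Vᴴ * V = Q)
      ↔ ∀ i : ℕ, MvNCompact (component P i) (component Q i) := by
  constructor
  · rintro ⟨V, hVA, hVP, hVQ⟩ i
    refine ⟨component V i, fun k l => hVA.1 k l i, ?_, ?_⟩
    · rw [← component_conjTranspose, ← component_mul, hVP]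
    · rw [← component_conjTranspose, ← component_mul, hVQ]
  · intro h
    choose W hWc hWP hWQ using h
    obtain ⟨C, hC⟩ := hPA.2
    refine ⟨fun k l i => W i k l, ⟨fun k l i => hWc i k l, ⟨Real.sqrt (max C 0), ?_⟩⟩, ?_, ?_⟩
    · intro k l i
      calc ‖W i k l‖ ≤ Real.sqrt ‖(W i * (W i)ᴴ) k k‖ := entry_norm_le (W i) k l
        _ ≤ Real.sqrt (max C 0) := by
            apply Real.sqrt_le_sqrt
            rw [hWP i]
            exact (hC k k i).trans (le_max_left _ _)
    · refine Matrix.ext fun k l => funext fun i => ?_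
      have := congrFun (congrFun (hWP i) k) l
      change ((Matrix.of fun k l i => W i k l) * (Matrix.of fun k l i => W i k l)ᴴ) k l i = P k l i
      simp only [component, Matrix.mul_apply, Matrix.conjTranspose_apply, Matrix.of_apply] at this ⊢
      simpa [Finset.sum_apply] using this
    · refine Matrix.ext fun k l => funext fun i => ?_
      have := congrFun (congrFun (hWQ i) k) l
      change ((Matrix.of fun k l i => W i k l)ᴴ * (Matrix.of fun k l i => W i k l)) k l i = Q k l i
      simp only [component, Matrix.mul_apply, Matrix.conjTranspose_apply, Matrix.of_apply] at this ⊢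
      simpa [Finset.sum_apply] using this

end
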